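/- arXiv:2306.11895 — 2 statements merged into one kernel-verified Lean document; each statement's English description precedes it below -/
import Mathlib

section
/- Let A ∈ R^{p×d} with AA^T = I_p, and suppose S: R^p → R^p is the gradient of a convex differentiable function φ: R^p → R. Then the spiked map T(x) = x - A^T(Ax - S(Ax)) is the gradient of the convex function Φ(x) = (1/2)‖(I_d - A^T A)x‖² + φ(Ax). -/
open Matrix

/-- Identity map between `Fin n → ℝ` and its Euclidean-space type synonym. -/
def toE {n : ℕ} (v : Fin n → ℝ) : EuclideanSpace ℝ (Fin n) := WithLp.toLp 2 v

/-- The inverse identity map. -/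
def ofE {n : ℕ} (v : EuclideanSpace ℝ (Fin n)) : Fin n → ℝ := v

noncomputable def mulVecCLM {m n : ℕ} (M : Matrix (Fin m) (Fin n) ℝ) :
    EuclideanSpace ℝ (Fin n) →L[ℝ] EuclideanSpace ℝ (Fin m) :=
  LinearMap.toContinuousLinearMap
    { toFun := fun x => toE (M.mulVec (ofE x))
      map_add' := fun x y => by
        ext i
        simp [toE, ofE, Matrix.mulVec, dotProduct, PiLp.add_apply, mul_add,
          Finset.sum_add_distrib]
      map_smul' := fun c x => by
        ext i
        simp [toE, ofE, Matrix.mulVec, dotProduct, PiLp.smul_apply, Finset.mul_sum,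
          mul_left_comm] }

@[simp] lemma ofE_toE {n : ℕ} (v : Fin n → ℝ) : ofE (toE v) = v := rfl

@[simp] lemma ofE_sub {n : ℕ} (u v : EuclideanSpace ℝ (Fin n)) :
    ofE (u - v) = ofE u - ofE v := rfl

@[simp] lemma mulVecCLM_apply {m n : ℕ} (M : Matrix (Fin m) (Fin n) ℝ)
    (x : EuclideanSpace ℝ (Fin n)) : mulVecCLM M x = toE (M.mulVec (ofE x)) := rfl

lemma convexOn_finset_sum {E : Type*} [AddCommMonoid E] [Module ℝ E] {ι : Type*}
    (t : Finset ι) (f : ι → E → ℝ) (h : ∀ i ∈ t, ConvexOn ℝ Set.univ (f i)) :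
    ConvexOn ℝ Set.univ (fun x => ∑ i ∈ t, f i x) := by
  classical
  induction t using Finset.induction with
  | empty => simpa using convexOn_const (0 : ℝ) convex_univ
  | @insert a s ha ih =>
    simp only [Finset.sum_insert ha]
    exact (h a (Finset.mem_insert_self a s)).add
      (ih fun i hi => h i (Finset.mem_insert_of_mem hi))

lemma inner_eq_dot {n : ℕ} (u v : EuclideanSpace ℝ (Fin n)) :
    (inner ℝ u v : ℝ) = ofE u ⬝ᵥ ofE v := by
  simp [PiLp.inner_apply, RCLike.inner_apply, dotProduct, ofE, mul_comm]

/-- If S = ∇φ with φ convex differentiable, then the spiked map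
T(x) = x - Aᵀ(Ax - S(Ax)) is the gradient of the convex function
Φ(x) = ½‖(I - AᵀA)x‖² + φ(Ax). -/
theorem stmt_17 {p d : ℕ} (A : Matrix (Fin p) (Fin d) ℝ) (hA : A * Aᵀ = 1)
    (φ : EuclideanSpace ℝ (Fin p) → ℝ) (hφ : ConvexOn ℝ Set.univ φ)
    (S : EuclideanSpace ℝ (Fin p) → EuclideanSpace ℝ (Fin p))
    (hS : ∀ y, HasGradientAt φ (S y) y) :
    let Φ : EuclideanSpace ℝ (Fin d) → ℝ := fun x =>
      (1 / 2) * (∑ i, ((((1 : Matrix (Fin d) (Fin d) ℝ) - Aᵀ * A).mulVec (ofE x)) i) ^ 2) +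
        φ (toE (A.mulVec (ofE x)))
    ConvexOn ℝ Set.univ Φ ∧
    ∀ x : EuclideanSpace ℝ (Fin d),
      HasGradientAt Φ
        (x - toE (Aᵀ.mulVec (A.mulVec (ofE x) - ofE (S (toE (A.mulVec (ofE x))))))) x := by
  intro Φ
  set B : Matrix (Fin d) (Fin d) ℝ := 1 - Aᵀ * A with hB
  have hBT : Bᵀ = B := by
    simp [hB, transpose_sub, transpose_mul]
  have hX : Aᵀ * A * (Aᵀ * A) = Aᵀ * A := by
    rw [Matrix.mul_assoc, ← Matrix.mul_assoc A, hA, Matrix.one_mul]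
  have hBB : B * B = B := by
    rw [hB]
    simp only [Matrix.sub_mul, Matrix.mul_sub, Matrix.one_mul, Matrix.mul_one, hX]
    abel
  set L := mulVecCLM A with hL
  set M := mulVecCLM B with hM
  constructor
  · -- convexity
    have h1 : ConvexOn ℝ Set.univ (fun x : EuclideanSpace ℝ (Fin d) =>
        ∑ i, ((B.mulVec (ofE x)) i) ^ 2) := by
      refine convexOn_finset_sum Finset.univ _ (fun i _ => ?_)
      have heven : ConvexOn ℝ Set.univ (fun t : ℝ => t ^ 2) := (even_two).convexOn_pow
      have := heven.comp_affineMap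
        (((EuclideanSpace.proj i).toLinearMap.comp (mulVecCLM B).toLinearMap).toAffineMap)
      simpa [Function.comp_def, toE, ofE] using this
    have h1' : ConvexOn ℝ Set.univ (fun x : EuclideanSpace ℝ (Fin d) =>
        (1/2 : ℝ) * ∑ i, ((B.mulVec (ofE x)) i) ^ 2) := by
      have := h1.smul (c := (1/2 : ℝ)) (by norm_num)
      simpa [smul_eq_mul] using this
    have h2 : ConvexOn ℝ Set.univ (fun x : EuclideanSpace ℝ (Fin d) =>
        φ (toE (A.mulVec (ofE x)))) := by
      have := hφ.comp_affineMap ((mulVecCLM A).toLinearMap.toAffineMap)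
      simpa [Function.comp_def] using this
    exact h1'.add h2
  · intro x
    -- quadratic part derivative
    have hMx : HasFDerivAt (fun y : EuclideanSpace ℝ (Fin d) => M y) M x := M.hasFDerivAt
    have hq0 := hMx.inner ℝ hMx
    have hq := hq0.const_mul (1/2 : ℝ)
    have hφ' : HasFDerivAt (fun y : EuclideanSpace ℝ (Fin d) => φ (L y))
        (((InnerProductSpace.toDual ℝ _) (S (L x))).comp L) x := by
      exact ((hS (L x)).hasFDerivAt.comp x L.hasFDerivAt)
    have htot := hq.add hφ'
    have hΦeq : Φ = fun y : EuclideanSpace ℝ (Fin d) =>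
        (1/2 : ℝ) * (inner ℝ (M y) (M y) : ℝ) + φ (L y) := by
      funext y
      simp only [Φ, hL, hM, mulVecCLM_apply, inner_eq_dot]
      congr 1
      simp [hB, dotProduct, pow_two]
    rw [hasGradientAt_iff_hasFDerivAt]
    rw [hΦeq]
    convert htot using 1
    · rfl
    · rfl
    · rfl
    ext v
    simp only [InnerProductSpace.toDual_apply_apply, ContinuousLinearMap.add_apply,
      ContinuousLinearMap.coe_smul', Pi.smul_apply, ContinuousLinearMap.comp_apply,
      fderivInnerCLM_apply, ContinuousLinearMap.prod_apply, smul_eq_mul]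
    rw [inner_eq_dot, inner_eq_dot, inner_eq_dot, inner_eq_dot]
    simp only [hM, hL, mulVecCLM_apply, ofE_toE, ofE_sub]
    have key1 : ∀ (u : Fin p → ℝ) (w : Fin d → ℝ), (Aᵀ.mulVec u) ⬝ᵥ w = u ⬝ᵥ (A.mulVec w) := by
      intro u w
      rw [Matrix.mulVec_transpose, ← Matrix.dotProduct_mulVec]
    have hvm : ∀ u : Fin d → ℝ, u ᵥ* B = B.mulVec u := fun u => by
      rw [← hBT, Matrix.vecMul_transpose, hBT]
    have key2 : (B.mulVec (ofE x)) ⬝ᵥ (B.mulVec (ofE v)) = (B.mulVec (ofE x)) ⬝ᵥ ofE v := by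
      rw [Matrix.dotProduct_mulVec, hvm, Matrix.mulVec_mulVec, hBB]
    rw [dotProduct_comm (B.mulVec (ofE v)), key2]
    simp only [hB, Matrix.sub_mulVec, Matrix.one_mulVec, sub_dotProduct,
      Matrix.mulVec_sub, ← Matrix.mulVec_mulVec, key1]
    ring
end

section
/- Fix x ∈ R^d, γ > 0, a convex function τ: R^d → R, λ > 0, and concave differentiable g: R^d → R. The fixed points of the iteration y ↦ x + prox_{(λγ/(λ+1))τ}((y - x + λ∇g(y))/(1+λ)) are exactly the minimizers of F(y) = (1/2)‖x-y‖² + γτ(x-y) - g(y), assuming τ is differentiable and τ(z)=τ(-z). -/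
open InnerProductSpace

section Helpers

variable {E : Type*} [NormedAddCommGroup E] [InnerProductSpace ℝ E] [CompleteSpace E]

lemma my_gradAdd {f g : E → ℝ} {f' g' a : E} (hf : HasGradientAt f f' a)
    (hg : HasGradientAt g g' a) : HasGradientAt (fun w => f w + g w) (f' + g') a := by
  rw [hasGradientAt_iff_hasFDerivAt] at *
  rw [map_add]; exact hf.add hg

lemma my_gradSub {f g : E → ℝ} {f' g' a : E} (hf : HasGradientAt f f' a)
    (hg : HasGradientAt g g' a) : HasGradientAt (fun w => f w - g w) (f' - g') a := by
  rw [hasGradientAt_iff_hasFDerivAt] at *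
  rw [map_sub]; exact hf.sub hg

lemma my_gradNeg {g : E → ℝ} {g' a : E} (hg : HasGradientAt g g' a) :
    HasGradientAt (fun w => -g w) (-g') a := by
  rw [hasGradientAt_iff_hasFDerivAt] at *
  rw [map_neg]; exact hg.neg

lemma my_gradConstMul {f : E → ℝ} {f' a : E} (c : ℝ) (hf : HasGradientAt f f' a) :
    HasGradientAt (fun w => c * f w) (c • f') a := by
  rw [hasGradientAt_iff_hasFDerivAt] at *
  simpa [map_smul] using hf.const_mul c

lemma my_gradQuad (v z : E) :
    HasGradientAt (fun w : E => (1/2 : ℝ) * ‖v - w‖ ^ 2) (z - v) z := by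
  rw [hasGradientAt_iff_hasFDerivAt]
  have h1 : HasFDerivAt (fun w : E => v - w) (-(ContinuousLinearMap.id ℝ E)) z := by
    exact (hasFDerivAt_id (𝕜 := ℝ) z).const_sub v
  have h2 := (h1.inner ℝ h1).const_mul (1/2 : ℝ)
  have heq : (fun w : E => (1/2 : ℝ) * ‖v - w‖ ^ 2)
      = fun w : E => (1/2 : ℝ) * ⟪v - w, v - w⟫_ℝ := by
    funext w; rw [real_inner_self_eq_norm_sq]
  rw [heq]
  refine h2.congr_fderiv ?_
  ext u
  simp [real_inner_smul_left, inner_sub_left, inner_sub_right]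
  have c1 := real_inner_comm u v
  have c2 := real_inner_comm u z
  linarith

lemma my_gradCompSub {f : E → ℝ} {f' : E} (x z : E) (h : HasGradientAt f f' (x - z)) :
    HasGradientAt (fun w => f (x - w)) (-f') z := by
  rw [hasGradientAt_iff_hasFDerivAt] at *
  have h1 : HasFDerivAt (fun w : E => x - w) (-(ContinuousLinearMap.id ℝ E)) z := by
    exact (hasFDerivAt_id (𝕜 := ℝ) z).const_sub x
  have := h.comp z h1
  refine this.congr_fderiv ?_
  ext u
  simp [inner_neg_left]

/-- First-order condition for a differentiable convex function. -/
lemma my_firstOrder {f : E → ℝ} (hf : ConvexOn ℝ Set.univ f) {a f' : E}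
    (h : HasGradientAt f f' a) (b : E) : f a + ⟪f', b - a⟫_ℝ ≤ f b := by
  set L : ℝ →ᵃ[ℝ] E := AffineMap.lineMap a b with hL
  have hLapp : ∀ t : ℝ, L t = t • (b - a) + a := by
    intro t; simp [hL, AffineMap.lineMap_apply]
  have hφconv : ConvexOn ℝ Set.univ (f ∘ L) := by
    have := hf.comp_affineMap L
    simpa using this
  have hc : HasDerivAt (fun t : ℝ => L t) (b - a) 0 := by
    simp only [hLapp]
    simpa using ((hasDerivAt_id (0:ℝ)).smul_const (b - a)).add_const a
  have hL0 : L 0 = a := by simp [hLapp]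
  have hfd : HasFDerivAt f ((toDual ℝ E) f') (L 0) := hL0 ▸ h.hasFDerivAt
  have hd : HasDerivAt (f ∘ L) ⟪f', b - a⟫_ℝ 0 := by
    have := hfd.comp_hasDerivAt 0 hc
    simpa using this
  have hslope := hφconv.le_slope_of_hasDerivAt (Set.mem_univ (0:ℝ))
    (Set.mem_univ (1:ℝ)) one_pos hd
  have h0 : (f ∘ L) 0 = f a := by simp [hL0]
  have h1 : (f ∘ L) 1 = f b := by simp [hLapp]
  rw [slope_def_field, h0, h1] at hslope
  simp at hslope
  linarith

/-- A global minimum of a function with a gradient forces the gradient to vanish. -/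
lemma my_gradZeroOfMin {f : E → ℝ} {a f' : E} (h : HasGradientAt f f' a)
    (hm : ∀ b, f a ≤ f b) : f' = 0 := by
  have hloc : IsLocalMin f a := Filter.Eventually.of_forall hm
  have h0 := hloc.hasFDerivAt_eq_zero h.hasFDerivAt
  exact (toDual ℝ E).injective (by simp [h0])

end Helpers

set_option maxHeartbeats 1000000 in
/-- Fixed points of y ↦ x + prox_{(λγ/(λ+1))τ}((y - x + λ∇g(y))/(1+λ)) are exactly
the minimizers of F(y) = ½‖x-y‖² + γτ(x-y) - g(y). -/
theorem stmt_19 {d : ℕ} (x : EuclideanSpace ℝ (Fin d)) (γ lam : ℝ)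
    (hγ : 0 < γ) (hlam : 0 < lam)
    (τ : EuclideanSpace ℝ (Fin d) → ℝ) (hτconv : ConvexOn ℝ Set.univ τ)
    (hτdiff : Differentiable ℝ τ) (hτeven : ∀ z, τ (-z) = τ z)
    (g : EuclideanSpace ℝ (Fin d) → ℝ) (hg : ConcaveOn ℝ Set.univ g)
    (gradg : EuclideanSpace ℝ (Fin d) → EuclideanSpace ℝ (Fin d))
    (hgd : ∀ y, HasGradientAt g (gradg y) y) :
    let σ : ℝ := lam * γ / (lam + 1)
    let F : EuclideanSpace ℝ (Fin d) → ℝ := fun y =>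
      (1 / 2) * ‖x - y‖ ^ 2 + γ * τ (x - y) - g y
    ∀ y zstar : EuclideanSpace ℝ (Fin d),
      (∀ z, (1 / 2) * ‖(1 / (1 + lam)) • (y - x + lam • gradg y) - zstar‖ ^ 2 + σ * τ zstar ≤
            (1 / 2) * ‖(1 / (1 + lam)) • (y - x + lam • gradg y) - z‖ ^ 2 + σ * τ z) →
      (y = x + zstar ↔ ∀ y', F y ≤ F y') := by
  intro σ F y zstar hprox
  have hσ : σ = lam * γ / (lam + 1) := rfl
  have hF : ∀ w, F w = (1/2) * ‖x - w‖ ^ 2 + γ * τ (x - w) - g w := fun _ => rfl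
  have hlam1 : (0:ℝ) < 1 + lam := by linarith
  have hσpos : 0 < σ := by rw [hσ]; positivity
  set v : EuclideanSpace ℝ (Fin d) := (1 / (1 + lam)) • (y - x + lam • gradg y) with hv
  set T : EuclideanSpace ℝ (Fin d) → EuclideanSpace ℝ (Fin d) :=
    fun z => gradient τ z with hTdef
  have hT : ∀ z, HasGradientAt τ (T z) z := fun z => (hτdiff z).hasGradientAt
  -- gradient of an even function is odd
  have hodd : ∀ z, T (-z) = -T z := by
    intro z
    have h0 : HasGradientAt τ (T (-z)) (0 - z) := by
      simpa using hT (-z)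
    have h1 := my_gradCompSub 0 z h0
    have h2 : (fun w => τ (0 - w)) = τ := by
      funext w; rw [zero_sub, hτeven]
    rw [h2] at h1
    have := (hT z).unique h1
    rw [this, neg_neg]
  -- gradient of the prox objective vanishes at zstar
  have hψ : ∀ z, HasGradientAt (fun w => (1/2 : ℝ) * ‖v - w‖ ^ 2 + σ * τ w)
      ((z - v) + σ • T z) z :=
    fun z => my_gradAdd (my_gradQuad v z) (my_gradConstMul σ (hT z))
  have hz0 : (zstar - v) + σ • T zstar = 0 := my_gradZeroOfMin (hψ zstar) hprox
  -- gradient of F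
  have hFgrad : ∀ y', HasGradientAt F
      (((y' - x) + -(γ • T (x - y'))) - gradg y') y' := by
    intro y'
    have hA := my_gradQuad x y'
    have hB := my_gradCompSub x y' (my_gradConstMul γ (hT (x - y')))
    exact my_gradSub (my_gradAdd hA hB) (hgd y')
  have hTo : T (x - y) = -T (y - x) := by
    have : x - y = -(y - x) := by abel
    rw [this, hodd]
  constructor
  · -- fixed point → minimizer
    intro hyx
    have hz : zstar = y - x := by rw [hyx]; abel
    rw [hz] at hz0
    -- gradient of F at y vanishes
    have hG0 : ((y - x) + -(γ • T (x - y))) - gradg y = 0 := by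
      have key : ((y - x) + -(γ • T (x - y))) - gradg y
          = ((1 + lam)/lam) • (((y - x) - v) + σ • T (y - x)) := by
        rw [hTo, hσ, hv]
        match_scalars <;> field_simp <;> ring
      rw [key, hz0, smul_zero]
    intro y'
    rw [hF y, hF y']
    -- quadratic part
    have hq : (1/2 : ℝ) * ‖x - y‖ ^ 2 + ⟪y - x, y' - y⟫_ℝ ≤ (1/2) * ‖x - y'‖ ^ 2 := by
      have hdecomp : x - y' = (x - y) + (y - y') := by abel
      rw [hdecomp, norm_add_sq_real]
      have h2 : ⟪x - y, y - y'⟫_ℝ = ⟪y - x, y' - y⟫_ℝ := by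
        rw [show x - y = -(y - x) by abel, show y - y' = -(y' - y) by abel,
          inner_neg_neg]
      rw [h2]
      nlinarith [sq_nonneg ‖y - y'‖]
    -- τ part
    have hτb := my_firstOrder hτconv (hT (x - y)) (x - y')
    have he : (x - y') - (x - y) = -(y' - y) := by abel
    rw [he, inner_neg_right] at hτb
    have hτb' : γ * τ (x - y) - γ * ⟪T (x - y), y' - y⟫_ℝ ≤ γ * τ (x - y') := by
      nlinarith [hτb]
    -- g part
    have hgb := my_firstOrder hg.neg (my_gradNeg (hgd y)) y'
    simp only [Pi.neg_apply, inner_neg_left] at hgb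
    -- combine using gradient-zero
    have hip : ⟪((y - x) + -(γ • T (x - y))) - gradg y, y' - y⟫_ℝ = 0 := by
      rw [hG0]; simp
    rw [inner_sub_left, inner_add_left, inner_neg_left, real_inner_smul_left] at hip
    linarith
  · -- minimizer → fixed point
    intro hmin
    have hG0 := my_gradZeroOfMin (hFgrad y) (fun b => hmin b)
    have hb : ((y - x) - v) + σ • T (y - x) = 0 := by
      have key : ((y - x) - v) + σ • T (y - x)
          = (lam/(1 + lam)) • (((y - x) + -(γ • T (x - y))) - gradg y) := by
        rw [hTo, hσ, hv]
        match_scalars <;> field_simp <;> ring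
      rw [key, hG0, smul_zero]
    -- monotonicity of the gradient of τ
    have h1 := my_firstOrder hτconv (hT zstar) (y - x)
    have h2 := my_firstOrder hτconv (hT (y - x)) zstar
    have e1 : (y - x) - zstar = -(zstar - (y - x)) := by abel
    rw [e1, inner_neg_right] at h1
    have hmono : 0 ≤ ⟪T zstar, zstar - (y - x)⟫_ℝ - ⟪T (y - x), zstar - (y - x)⟫_ℝ := by
      linarith
    -- the two prox equations give zstar = y - x
    have e2 : zstar - v = -(σ • T zstar) := by
      rwa [add_eq_zero_iff_eq_neg] at hz0
    have e3 : (y - x) - v = -(σ • T (y - x)) := by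
      rwa [add_eq_zero_iff_eq_neg] at hb
    have hdiff : zstar - (y - x) = σ • (T (y - x) - T zstar) := by
      have h4 : zstar - (y - x) = (zstar - v) - ((y - x) - v) := by abel
      rw [h4, e2, e3, smul_sub]; abel
    have hinner : ⟪zstar - (y - x), zstar - (y - x)⟫_ℝ
        = σ * ⟪T (y - x) - T zstar, zstar - (y - x)⟫_ℝ := by
      have := congrArg (fun w => ⟪w, zstar - (y - x)⟫_ℝ) hdiff
      beta_reduce at this
      rw [this, real_inner_smul_left]
    have hsub : ⟪T (y - x) - T zstar, zstar - (y - x)⟫_ℝ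
        = ⟪T (y - x), zstar - (y - x)⟫_ℝ - ⟪T zstar, zstar - (y - x)⟫_ℝ :=
      inner_sub_left _ _ _
    have hle : ⟪zstar - (y - x), zstar - (y - x)⟫_ℝ ≤ 0 := by
      nlinarith [hinner, hsub, hmono, hσpos]
    have hz : zstar - (y - x) = 0 := by
      have := real_inner_self_nonneg (x := zstar - (y - x))
      have h5 : ⟪zstar - (y - x), zstar - (y - x)⟫_ℝ = 0 := le_antisymm hle this
      exact inner_self_eq_zero.mp (by exact_mod_cast h5)
    rw [sub_eq_zero] at hz
    rw [hz]; abel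
end
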